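/- Let D₃ = diag(1, -1, e^{2πi/3}) and v₂ = ((1/2)e^{-iπ/9}, i/2, 1/√2). For all integers s,t, ⟨D₃ˢv₂, D₃ᵗv₂⟩ = 1/4 + (-1)^{t-s}/4 + (1/2)ζ^{t-s} where ζ = e^{2πi/3}; consequently |⟨D₃ˢv₂, D₃ᵗv₂⟩| = 1/2 whenever s ≢ t (mod 6), and the vectors D₃ᵗv₂, t = 0,…,5, are six distinct unit vectors. -/

import Mathlib

open Matrix Complex

noncomputable def ζ : ℂ := Complex.exp (2 * Real.pi * Complex.I / 3)

noncomputable def v₂ : Fin 3 → ℂ :=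
  ![(1 / 2 : ℂ) * Complex.exp (-(Real.pi * Complex.I / 9)),
    Complex.I / 2, ((Real.sqrt 2 : ℂ))⁻¹]

lemma zeta_eq : ζ = (↑(-1/2 : ℝ) + (Real.sqrt 3 / 2 : ℝ) * Complex.I : ℂ) := by
  rw [ζ, show (2 * (Real.pi:ℂ) * Complex.I / 3) = ((2*Real.pi/3 : ℝ):ℂ) * Complex.I by push_cast; ring,
    Complex.exp_mul_I, ← Complex.ofReal_cos, ← Complex.ofReal_sin]
  rw [show (2*Real.pi/3 : ℝ) = Real.pi - Real.pi/3 by ring, Real.cos_pi_sub, Real.sin_pi_sub,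
    Real.cos_pi_div_three, Real.sin_pi_div_three]
  norm_num
lemma zeta_ne_zero : ζ ≠ 0 := Complex.exp_ne_zero _
lemma zeta_cube : ζ ^ (3:ℕ) = 1 := by
  rw [ζ, ← Complex.exp_nat_mul,
    show ((3:ℕ):ℂ) * (2 * Real.pi * Complex.I / 3) = 2*Real.pi*Complex.I by push_cast; ring,
    Complex.exp_two_pi_mul_I]
lemma zeta_ne_one : ζ ≠ 1 := by
  rw [zeta_eq]
  intro h
  have h2 := congrArg Complex.im h
  simp at h2
lemma zeta_sum : 1 + ζ + ζ^(2:ℕ) = 0 := by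
  have h : (ζ - 1) * (ζ^(2:ℕ) + ζ + 1) = 0 := by linear_combination zeta_cube
  rcases mul_eq_zero.mp h with h | h
  · exact absurd (sub_eq_zero.mp h) zeta_ne_one
  · linear_combination h
lemma zeta_abs : ‖ζ‖ = 1 := by simp [ζ, Complex.norm_exp]
lemma zeta_conj : (starRingEnd ℂ) ζ = ζ⁻¹ := by
  rw [Complex.inv_def, ← Complex.sq_norm, zeta_abs]
  norm_num

abbrev M3 := Matrix (Fin 3) (Fin 3) ℂ

lemma diag_fun_eq {a b : ℂ} {c d : ℂ} {e f : ℂ} (h1 : a = b) (h2 : c = d) (h3 : e = f) :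
    Matrix.diagonal ![a, c, e] = Matrix.diagonal ![b, d, f] := by
  subst h1 h2 h3; rfl

lemma diag_zpow (D : M3ˣ) (hD : (D : M3) = Matrix.diagonal ![1, -1, ζ]) (n : ℤ) :
    ((D ^ n : M3ˣ) : M3) = Matrix.diagonal ![1, (-1)^n, ζ^n] := by
  have hinv : (D : M3) * Matrix.diagonal ![1, -1, ζ⁻¹] = 1 := by
    rw [hD, Matrix.diagonal_mul_diagonal, ← Matrix.diagonal_one]
    refine congrArg Matrix.diagonal (funext fun i => ?_)
    fin_cases i <;> simp [zeta_ne_zero]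
  have key : ∀ m : ℤ, ((D ^ m : M3ˣ) : M3) = Matrix.diagonal ![1, (-1)^m, ζ^m] →
      ((D ^ (m+1) : M3ˣ) : M3) = Matrix.diagonal ![1, (-1)^(m+1), ζ^(m+1)] ∧
      ((D ^ (m-1) : M3ˣ) : M3) = Matrix.diagonal ![1, (-1)^(m-1), ζ^(m-1)] := by
    intro m hm
    constructor
    · rw [_root_.zpow_add_one, Units.val_mul, hm, hD, Matrix.diagonal_mul_diagonal]
      refine congrArg Matrix.diagonal (funext fun i => ?_)
      fin_cases i
      · simp
      · simp [zpow_add_one₀ (by norm_num : (-1:ℂ) ≠ 0)]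
      · simp [zpow_add_one₀ zeta_ne_zero]
    · have h1 : ((D ^ (m-1) : M3ˣ) : M3) * (D : M3) = Matrix.diagonal ![1, (-1)^m, ζ^m] := by
        rw [← Units.val_mul, ← _root_.zpow_add_one, sub_add_cancel, hm]
      have h2 : ((D ^ (m-1) : M3ˣ) : M3) =
          Matrix.diagonal ![1, (-1)^m, ζ^m] * Matrix.diagonal ![1, -1, ζ⁻¹] :=
        calc ((D ^ (m-1) : M3ˣ) : M3)
            = ((D ^ (m-1) : M3ˣ) : M3) * ((D : M3) * Matrix.diagonal ![1, -1, ζ⁻¹]) := by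
              rw [hinv, mul_one]
          _ = Matrix.diagonal ![1, (-1)^m, ζ^m] * Matrix.diagonal ![1, -1, ζ⁻¹] := by
              rw [← mul_assoc, h1]
      rw [h2, Matrix.diagonal_mul_diagonal]
      refine congrArg Matrix.diagonal (funext fun i => ?_)
      fin_cases i
      · simp
      · simp [zpow_sub_one₀ (by norm_num : (-1:ℂ) ≠ 0)]
      · simp [zpow_sub_one₀ zeta_ne_zero]
  induction n using Int.induction_on with
  | zero =>
      rw [zpow_zero, zpow_zero, zpow_zero, Units.val_one, ← Matrix.diagonal_one]
      exact congrArg Matrix.diagonal (funext fun i => by fin_cases i <;> simp)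
  | succ k ih => exact (key k ih).1
  | pred k ih => exact (key (-k) ih).2

lemma main_formula (s t : ℤ) :
    star ((Matrix.diagonal ![1,(-1)^s,ζ^s]).mulVec v₂) ⬝ᵥ
      ((Matrix.diagonal ![1,(-1)^t,ζ^t]).mulVec v₂) = 1/4 + (-1:ℂ)^(t-s)/4 + ζ^(t-s)/2 := by
  have hne : (-1:ℂ) ≠ 0 := by norm_num
  have hconj1 : (starRingEnd ℂ) ((-1:ℂ)^s) = (-1:ℂ)^s := by
    rw [map_zpow₀]; norm_num
  have hconj2 : (starRingEnd ℂ) (ζ^s) = ζ^(-s) := by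
    rw [map_zpow₀, zeta_conj, _root_.inv_zpow, ← _root_.zpow_neg]
  have hm1 : (-1:ℂ)^s * (-1:ℂ)^t = (-1:ℂ)^(t-s) := by
    rw [← zpow_add₀ hne, show s + t = (t-s) + 2*s by ring, zpow_add₀ hne, _root_.zpow_mul]
    norm_num
  have hz : ζ^(-s) * ζ^t = ζ^(t-s) := by
    rw [← zpow_add₀ zeta_ne_zero]; ring_nf
  have hexp : (starRingEnd ℂ) (Complex.exp (-(Real.pi * Complex.I / 9))) *
      Complex.exp (-(Real.pi * Complex.I / 9)) = 1 := by
    rw [← Complex.exp_conj, ← Complex.exp_add,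
      show (starRingEnd ℂ) (-((Real.pi:ℂ) * Complex.I / 9)) + -((Real.pi:ℂ) * Complex.I / 9) = 0 by
        rw [show -((Real.pi:ℂ) * Complex.I / 9) = ((-(Real.pi/9) : ℝ) : ℂ) * Complex.I by
          push_cast; ring, _root_.map_mul, Complex.conj_ofReal, Complex.conj_I]
        ring,
      Complex.exp_zero]
  have hsqrt : ((Real.sqrt 2 : ℝ):ℂ)⁻¹ * ((Real.sqrt 2 : ℝ):ℂ)⁻¹ = 1/2 := by
    rw [← mul_inv, ← Complex.ofReal_mul, Real.mul_self_sqrt (by norm_num)]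
    norm_num
  simp only [dotProduct, Fin.sum_univ_three, Matrix.mulVec_diagonal, Pi.star_apply,
    v₂, Matrix.cons_val_zero, Matrix.cons_val_one, Matrix.head_cons, Matrix.cons_val_two,
    Matrix.tail_cons, RCLike.star_def, _root_.map_mul, hconj1, hconj2, _root_.map_one,
    map_inv₀, Complex.conj_ofReal, map_div₀, Complex.conj_I, map_ofNat]
  rw [show ∀ a b c d e f : ℂ, a*b + c*d + e*f = a*b + c*d + e*f from fun _ _ _ _ _ _ => rfl]
  have hI : Complex.I * Complex.I = -1 := Complex.I_mul_I
  linear_combination (1/4)*hexp - (Complex.I*Complex.I/4)*hm1 - ((-1:ℂ)^(t-s)/4)*hI +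
    (((Real.sqrt 2:ℝ):ℂ)⁻¹*((Real.sqrt 2:ℝ):ℂ)⁻¹)*hz + ζ^(t-s)*hsqrt

lemma z2 : ζ^(2:ℤ) = ζ*ζ := by
  rw [show (2:ℤ) = 1+1 by norm_num, zpow_add₀ zeta_ne_zero, zpow_one]
lemma z3 : ζ^(3:ℤ) = 1 := by
  rw [show (3:ℤ) = 1+1+1 by norm_num, zpow_add₀ zeta_ne_zero, zpow_add₀ zeta_ne_zero, zpow_one]
  linear_combination zeta_cube
lemma z4 : ζ^(4:ℤ) = ζ := by
  rw [show (4:ℤ) = 3+1 by norm_num, zpow_add₀ zeta_ne_zero, z3, zpow_one, one_mul]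
lemma z5 : ζ^(5:ℤ) = ζ*ζ := by
  rw [show (5:ℤ) = 3+2 by norm_num, zpow_add₀ zeta_ne_zero, z3, z2, one_mul]
lemma zsum' : 1 + ζ + ζ*ζ = 0 := by linear_combination zeta_sum
lemma abs_zeta_mul : ‖ζ*ζ‖ = 1 := by rw [norm_mul, zeta_abs]; norm_num

lemma abs_formula (r : ℤ) (hr : r % 6 ≠ 0) :
    ‖(1/4 + (-1:ℂ)^r/4 + ζ^r/2)‖ = 1/2 := by
  have hne : (-1:ℂ) ≠ 0 := by norm_num
  have h6 : ζ^(6:ℤ) = 1 := by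
    rw [show (6:ℤ) = 3+3 by norm_num, zpow_add₀ zeta_ne_zero, z3, one_mul]
  have hm6 : (-1:ℂ)^(6:ℤ) = 1 := by norm_num
  obtain ⟨q, m, hm0, hmlt, rfl⟩ : ∃ q m : ℤ, 0 ≤ m ∧ m < 6 ∧ r = 6*q + m :=
    ⟨r / 6, r % 6, Int.emod_nonneg r (by norm_num), Int.emod_lt_of_pos r (by norm_num),
      (Int.mul_ediv_add_emod r 6).symm⟩
  have hm : m ≠ 0 := by omega
  have e1 : (-1:ℂ)^(6*q+m) = (-1)^m := by
    rw [zpow_add₀ hne, _root_.zpow_mul, hm6, _root_.one_zpow, one_mul]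
  have e2 : ζ^(6*q+m) = ζ^m := by
    rw [zpow_add₀ zeta_ne_zero, _root_.zpow_mul, h6, _root_.one_zpow, one_mul]
  rw [e1, e2]
  interval_cases m
  · simp at hm
  · rw [zpow_one, zpow_one, show (1:ℂ)/4 + -1/4 + ζ/2 = ζ/2 by ring, norm_div, zeta_abs]
    norm_num
  · rw [z2, show (-1:ℂ)^(2:ℤ) = 1 by norm_num,
      show (1:ℂ)/4 + 1/4 + ζ*ζ/2 = -(ζ/2) by linear_combination (1/2)*zsum',
      norm_neg, norm_div, zeta_abs]
    norm_num
  · rw [z3, show (-1:ℂ)^(3:ℤ) = -1 by norm_num]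
    norm_num
  · rw [z4, show (-1:ℂ)^(4:ℤ) = 1 by norm_num,
      show (1:ℂ)/4 + 1/4 + ζ/2 = -(ζ*ζ/2) by linear_combination (1/2)*zsum',
      norm_neg, norm_div, abs_zeta_mul]
    norm_num
  · rw [z5, show (-1:ℂ)^(5:ℤ) = -1 by norm_num,
      show (1:ℂ)/4 + -1/4 + ζ*ζ/2 = ζ*ζ/2 by ring, norm_div, abs_zeta_mul]
    norm_num

/-- `D` is the (invertible) matrix `D₃ = diag(1, -1, e^{2πi/3})`, packaged as a
unit so that integer powers `D₃ᵗ` make sense. -/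
theorem stmt16 (D : (Matrix (Fin 3) (Fin 3) ℂ)ˣ)
    (hD : (D : Matrix (Fin 3) (Fin 3) ℂ) = Matrix.diagonal ![1, -1, ζ]) :
    (∀ s t : ℤ,
      star (((D ^ s : (Matrix (Fin 3) (Fin 3) ℂ)ˣ) : Matrix (Fin 3) (Fin 3) ℂ).mulVec v₂) ⬝ᵥ
        (((D ^ t : (Matrix (Fin 3) (Fin 3) ℂ)ˣ) : Matrix (Fin 3) (Fin 3) ℂ).mulVec v₂) =
        1 / 4 + (-1 : ℂ) ^ (t - s) / 4 + ζ ^ (t - s) / 2) ∧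
    (∀ s t : ℤ, s % 6 ≠ t % 6 →
      ‖(star (((D ^ s : (Matrix (Fin 3) (Fin 3) ℂ)ˣ) : Matrix (Fin 3) (Fin 3) ℂ).mulVec v₂) ⬝ᵥ
          (((D ^ t : (Matrix (Fin 3) (Fin 3) ℂ)ˣ) : Matrix (Fin 3) (Fin 3) ℂ).mulVec v₂))‖ =
        1 / 2) ∧
    (∀ t : Fin 6,
      star ((((D : Matrix (Fin 3) (Fin 3) ℂ)) ^ (t : ℕ)).mulVec v₂) ⬝ᵥ
        ((((D : Matrix (Fin 3) (Fin 3) ℂ)) ^ (t : ℕ)).mulVec v₂) = 1) ∧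
    Function.Injective
      (fun t : Fin 6 => (((D : Matrix (Fin 3) (Fin 3) ℂ)) ^ (t : ℕ)).mulVec v₂) := by
  have part1 : ∀ s t : ℤ,
      star (((D ^ s : M3ˣ) : M3).mulVec v₂) ⬝ᵥ (((D ^ t : M3ˣ) : M3).mulVec v₂) =
        1 / 4 + (-1 : ℂ) ^ (t - s) / 4 + ζ ^ (t - s) / 2 := by
    intro s t
    rw [diag_zpow D hD s, diag_zpow D hD t]
    exact main_formula s t
  have part2 : ∀ s t : ℤ, s % 6 ≠ t % 6 →
      ‖(star (((D ^ s : M3ˣ) : M3).mulVec v₂) ⬝ᵥ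
        (((D ^ t : M3ˣ) : M3).mulVec v₂))‖ = 1 / 2 := by
    intro s t h
    rw [part1 s t]
    exact abs_formula (t - s) (by omega)
  have key : ∀ n : ℕ, ((D : M3)) ^ n = ((D ^ ((n:ℕ):ℤ) : M3ˣ) : M3) := by
    intro n
    rw [zpow_natCast, Units.val_pow_eq_pow_val]
  have part3 : ∀ t : Fin 6,
      star ((((D : M3)) ^ (t : ℕ)).mulVec v₂) ⬝ᵥ ((((D : M3)) ^ (t : ℕ)).mulVec v₂) = 1 := by
    intro t
    rw [key (t : ℕ), part1 ((t:ℕ):ℤ) ((t:ℕ):ℤ), sub_self]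
    norm_num
  refine ⟨part1, part2, part3, ?_⟩
  intro a b hab
  by_contra hne
  have hab' : (((D : M3)) ^ (a : ℕ)).mulVec v₂ = (((D : M3)) ^ (b : ℕ)).mulVec v₂ := hab
  rw [key (a : ℕ), key (b : ℕ)] at hab'
  have hmod : ((a:ℕ):ℤ) % 6 ≠ ((b:ℕ):ℤ) % 6 := by
    have h1 := a.isLt
    have h2 := b.isLt
    have h3 : (a:ℕ) ≠ (b:ℕ) := fun h => hne (Fin.ext h)
    omega
  have h2 := part2 ((a:ℕ):ℤ) ((b:ℕ):ℤ) hmod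
  rw [← hab', part1 ((a:ℕ):ℤ) ((a:ℕ):ℤ), sub_self] at h2
  norm_num at h2
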